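/- arXiv:1303.3777 — 4 statements merged into one kernel-verified Lean document; each statement's English description precedes it below -/
import Mathlib

section
/- Reducibility via attractors: if X ⊆ W_{G,σ} is contained in σ's winning region of a Muller game G, and U = Attr(G, X, σ), then W_{G,σ} = U ∪ W_{G[V \ U], σ}, where G[V \ U] is the induced subgame on V \ U. -/
/-- `T` is a trap for the player whose vertex set is `Q`. -/
def IsTrap {V : Type*} (E : V → V → Prop) (Q T : Set V) : Prop :=
  (∀ v ∈ T, v ∈ Q → ∀ w, E v w → w ∈ T) ∧
  (∀ v ∈ T, v ∉ Q → ∃ w ∈ T, E v w)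

/-- Edge relation of the induced subgame `G[S]`. -/
def restrictE {V : Type*} (E : V → V → Prop) (S : Set V) : V → V → Prop :=
  fun v w => E v w ∧ v ∈ S ∧ w ∈ S

/-- Attractor for the player with vertex set `P`. -/
inductive AttrP {V : Type*} (E : V → V → Prop) (P X : Set V) : V → Prop
  | base {v} : v ∈ X → AttrP E P X v
  | step {v w} : v ∈ P → E v w → AttrP E P X w → AttrP E P X v
  | forced {v} : v ∉ P → (∀ w, E v w → AttrP E P X w) → AttrP E P X v

def attr {V : Type*} (E : V → V → Prop) (P X : Set V) : Set V :=
  {v | AttrP E P X v}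

/-- An infinite play: each step follows an edge. -/
def IsPlay {V : Type*} (E : V → V → Prop) (f : ℕ → V) : Prop :=
  ∀ n, E (f n) (f (n + 1))

/-- A strategy for the player with vertex set `P` maps a finite history plus
the current vertex to the next vertex; `f` is consistent with `s` if at every
`P`-vertex the next vertex is the one prescribed by `s`. -/
def Consistent {V : Type*} (P : Set V) (s : List V → V → V) (f : ℕ → V) : Prop :=
  ∀ n, f n ∈ P → f (n + 1) = s (List.ofFn (fun i : Fin n => f i)) (f n)

/-- The set of vertices occurring infinitely often in the play `f`. -/
def infSet {V : Type*} (f : ℕ → V) : Set V := {v | ∀ n, ∃ m, n ≤ m ∧ f m = v}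

/-- A strategy is valid if, at any `P`-vertex with at least one outgoing edge,
it prescribes moving along an edge. -/
def ValidStrat {V : Type*} (E : V → V → Prop) (P : Set V)
    (s : List V → V → V) : Prop :=
  ∀ (h : List V) (u : V), u ∈ P → (∃ w, E u w) → E u (s h u)

/-- The strategy `s` wins for the player with vertex set `P` and winning family
`W` (of infinity sets) from every play starting at `v` consistent with `s`. -/
def WinsFrom {V : Type*} (E : V → V → Prop) (P : Set V) (W : Set (Set V))
    (s : List V → V → V) (v : V) : Prop :=
  ∀ f : ℕ → V, f 0 = v → IsPlay E f → Consistent P s f → infSet f ∈ W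

/-- The winning region of the player with vertex set `P` and winning condition
`W` in the Muller game with edges `E`. -/
def winRegion {V : Type*} (E : V → V → Prop) (P : Set V) (W : Set (Set V)) :
    Set V :=
  {v | ∃ s : List V → V → V, ValidStrat E P s ∧ WinsFrom E P W s v}


section AttrAux

variable {V : Type*}

private lemma infSet_shift' (f : ℕ → V) (a : ℕ) :
    infSet (fun k => f (a + k)) = infSet f := by
  ext v
  constructor
  · intro h n
    obtain ⟨m, hm, he⟩ := h n
    exact ⟨a + m, le_trans hm (Nat.le_add_left m a), he⟩
  · intro h n
    obtain ⟨m, hm, he⟩ := h (a + n)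
    refine ⟨m - a, by omega, ?_⟩
    show f (a + (m - a)) = v
    have : a + (m - a) = m := by omega
    rw [this]; exact he

private lemma hist_add (f : ℕ → V) (a m : ℕ) :
    (List.ofFn fun i : Fin (a + m) => f i) =
      (List.ofFn fun i : Fin a => f i) ++ List.ofFn fun i : Fin m => f (a + i) := by
  rw [List.ofFn_add]; rfl

open Classical in
/-- A winning strategy from `v` if one exists, otherwise an arbitrary valid strategy. -/
noncomputable def stratOf (E : V → V → Prop) (hE : ∀ v, ∃ w, E v w) (P : Set V)
    (W : Set (Set V)) (v : V) : List V → V → V :=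
  if h : v ∈ winRegion E P W then h.choose else fun _ u => (hE u).choose

private lemma stratOf_valid (E : V → V → Prop) (hE : ∀ v, ∃ w, E v w) (P : Set V)
    (W : Set (Set V)) (v : V) : ValidStrat E P (stratOf E hE P W v) := by
  classical
  unfold stratOf
  split_ifs with h
  · exact h.choose_spec.1
  · exact fun hist u _ _ => (hE u).choose_spec

private lemma stratOf_wins (E : V → V → Prop) (hE : ∀ v, ∃ w, E v w) (P : Set V)
    (W : Set (Set V)) {v : V} (h : v ∈ winRegion E P W) :
    WinsFrom E P W (stratOf E hE P W v) v := by
  classical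
  unfold stratOf
  rw [dif_pos h]
  exact h.choose_spec.2

/-- If the tail of a play from time `a` on follows the chosen winning strategy of the
vertex `f a`, and `f a` is in the winning region, the play is won. -/
private lemma shift_win (E : V → V → Prop) (hE : ∀ v, ∃ w, E v w) (P : Set V)
    (W : Set (Set V)) (f : ℕ → V) (a : ℕ) (hf : IsPlay E f)
    (hw : f a ∈ winRegion E P W)
    (hc : ∀ m, f (a + m) ∈ P →
      f (a + m + 1) = stratOf E hE P W (f a)
        (List.ofFn fun i : Fin m => f (a + i)) (f (a + m))) :
    infSet f ∈ W := by
  have hwin := stratOf_wins E hE P W hw (fun k => f (a + k)) rfl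
    (fun n => hf (a + n)) hc
  rwa [infSet_shift'] at hwin

/-- One-step extension of the winning region. -/
private lemma comb_win (E : V → V → Prop) (hE : ∀ v, ∃ w, E v w) (P : Set V)
    (W : Set (Set V)) (v : V) (first : V → V) (hfirst : ∀ u ∈ P, E u (first u))
    (H : ∀ w, E v w → (v ∈ P → w = first v) → w ∈ winRegion E P W) :
    v ∈ winRegion E P W := by
  classical
  refine ⟨fun h u => if h = [] then first u else
      stratOf E hE P W (h.tail.headD u) h.tail u, ?_, ?_⟩
  · intro h u hu hex
    dsimp only
    split_ifs with hh
    · exact hfirst u hu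
    · exact stratOf_valid E hE P W _ h.tail u hu (hE u)
  · intro f hf0 hplay hcons
    have hf1 : f 1 ∈ winRegion E P W := by
      refine H (f 1) (hf0 ▸ hplay 0) (fun hvP => ?_)
      have := hcons 0 (by rw [hf0]; exact hvP)
      simpa [hf0] using this
    refine shift_win E hE P W f 1 hplay hf1 (fun m hm => ?_)
    have hc := hcons (1 + m) hm
    have hdec : (List.ofFn fun i : Fin (1 + m) => f i) =
        f 0 :: List.ofFn fun i : Fin m => f (1 + i) := by
      rw [hist_add f 1 m]; rfl
    rw [hdec] at hc
    have hc' : f (1 + m + 1) =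
        stratOf E hE P W ((List.ofFn fun i : Fin m => f (1 + i)).headD (f (1 + m)))
          (List.ofFn fun i : Fin m => f (1 + i)) (f (1 + m)) := by
      simpa using hc
    rw [hc']
    congr 1
    cases m with
    | zero => simp
    | succ m' => rw [List.ofFn_succ]; rfl

private lemma attr_subset_winRegion (E : V → V → Prop) (hE : ∀ v, ∃ w, E v w)
    (P : Set V) (W : Set (Set V)) (X : Set V) (hXW : X ⊆ winRegion E P W) :
    attr E P X ⊆ winRegion E P W := by
  intro v hv
  induction hv with
  | @base v h => exact hXW h
  | @step v w hvP hvw _ ih =>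
      classical
      refine comb_win E hE P W v (fun u => if u = v then w else (hE u).choose)
        (fun u _ => ?_) (fun w' hw' hw'' => ?_)
      · split_ifs with h
        · rw [h]; exact hvw
        · exact (hE u).choose_spec
      · have h2 : w' = w := by rw [hw'' hvP]; simp
        rw [h2]; exact ih
  | @forced v hvP hall ih =>
      exact comb_win E hE P W v (fun u => (hE u).choose)
        (fun u _ => (hE u).choose_spec) (fun w' hw' _ => ih w' hw')

end AttrAux


section SubgameAux

variable {V : Type*}

open Classical in
/-- Split a list at the first element belonging to `U`. -/
private noncomputable def splitU (U : Set V) : List V → List V × List V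
  | [] => ([], [])
  | x :: t => if x ∈ U then ([], x :: t)
      else ((x :: (splitU U t).1), (splitU U t).2)

private lemma splitU_none {U : Set V} (h : List V) (hh : ∀ x ∈ h, x ∉ U) :
    (splitU U h).2 = [] := by
  induction h with
  | nil => rfl
  | cons x t ih =>
      rw [splitU, if_neg (hh x (by simp))]
      exact ih (fun y hy => hh y (by simp [hy]))

private lemma splitU_mem {U : Set V} (a : List V) {w : V} (t : List V)
    (ha : ∀ x ∈ a, x ∉ U) (hw : w ∈ U) :
    (splitU U (a ++ w :: t)).2 = w :: t := by
  induction a with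
  | nil => rw [List.nil_append, splitU, if_pos hw]
  | cons x a' ih =>
      rw [List.cons_append, splitU, if_neg (ha x (by simp))]
      exact ih (fun y hy => ha y (by simp [hy]))

private lemma ofFn_not_mem {U : Set V} {f : ℕ → V} {n : ℕ} (h : ∀ k < n, f k ∉ U) :
    ∀ x ∈ (List.ofFn fun i : Fin n => f i), x ∉ U := by
  intro x hx
  simp only [List.mem_ofFn, Set.mem_range] at hx
  obtain ⟨i, rfl⟩ := hx
  exact h i i.isLt

private lemma subgame_to_game (E : V → V → Prop) (hE : ∀ v, ∃ w, E v w) (P : Set V)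
    (W : Set (Set V)) (X : Set V) (hXW : X ⊆ winRegion E P W) {v : V}
    (hvsub : v ∈ winRegion (restrictE E (attr E P X)ᶜ) (P ∩ (attr E P X)ᶜ)
      {S | S ∈ W ∧ S ⊆ (attr E P X)ᶜ}) :
    v ∈ winRegion E P W := by
  classical
  set U := attr E P X with hU
  obtain ⟨s', hs'v, hs'w⟩ := hvsub
  have htrap : ∀ u ∈ P, u ∉ U → ∀ w, E u w → w ∉ U := by
    intro u huP huU w hw hwU
    exact huU (AttrP.step huP hw hwU)
  have hres : ∀ u ∈ P, u ∉ U → ∀ h, restrictE E Uᶜ u (s' h u) := by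
    intro u huP huU h
    obtain ⟨w0, hw0⟩ := hE u
    exact hs'v h u ⟨huP, huU⟩ ⟨w0, hw0, huU, htrap u huP huU w0 hw0⟩
  refine ⟨fun h u =>
      if (splitU U h).2 = [] then
        (if u ∈ U then stratOf E hE P W u [] u
         else if restrictE E Uᶜ u (s' h u) then s' h u else (hE u).choose)
      else stratOf E hE P W ((splitU U h).2.headD u) ((splitU U h).2) u, ?_, ?_⟩
  · intro h u hu _
    dsimp only
    split_ifs with h1 h2 h3
    · exact stratOf_valid E hE P W u [] u hu (hE u)
    · exact h3.1
    · exact (hE u).choose_spec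
    · exact stratOf_valid E hE P W _ _ u hu (hE u)
  · intro f hf0 hplay hcons
    by_cases hstay : ∀ n, f n ∉ U
    · have hsub : IsPlay (restrictE E Uᶜ) f :=
        fun n => ⟨hplay n, hstay n, hstay (n + 1)⟩
      have hconsub : Consistent (P ∩ Uᶜ) s' f := by
        intro n hn
        have hc := hcons n hn.1
        dsimp only at hc
        rw [if_pos (splitU_none _ (ofFn_not_mem (fun k _ => hstay k))),
          if_neg hn.2, if_pos (hres (f n) hn.1 hn.2 _)] at hc
        exact hc
      exact (hs'w f hf0 hsub hconsub).1
    · push_neg at hstay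
      have hn0 : f (Nat.find hstay) ∈ U := Nat.find_spec hstay
      set n0 := Nat.find hstay with hn0def
      have hmin : ∀ k < n0, f k ∉ U := fun k hk => Nat.find_min hstay hk
      refine shift_win E hE P W f n0 hplay
        (attr_subset_winRegion E hE P W X hXW hn0) ?_
      intro m hm
      have hc := hcons (n0 + m) hm
      dsimp only at hc
      cases m with
      | zero =>
          rw [if_pos (splitU_none _ (ofFn_not_mem (fun k hk => hmin k (by omega)))),
            if_pos (show f (n0 + 0) ∈ U from hn0)] at hc
          simpa using hc
      | succ m' =>
          have h2 : (List.ofFn fun i : Fin (m' + 1) => f (n0 + i)) =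
              f n0 :: List.ofFn fun i : Fin m' => f (n0 + (i + 1)) := by
            rw [List.ofFn_succ]; rfl
          have hdec : (List.ofFn fun i : Fin (n0 + (m' + 1)) => f i) =
              (List.ofFn fun i : Fin n0 => f i) ++
                (f n0 :: List.ofFn fun i : Fin m' => f (n0 + (i + 1))) := by
            rw [hist_add f n0 (m' + 1), h2]
          rw [hdec] at hc
          rw [splitU_mem _ _ (ofFn_not_mem hmin) hn0] at hc
          rw [if_neg (List.cons_ne_nil _ _)] at hc
          rw [hc, ← h2]
          rw [h2, List.headD_cons]

end SubgameAux

/-- Reducibility via attractors: if `X ⊆ W_{G,σ}` is contained in σ's winning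
region of a Muller game `G` and `U = Attr(G, X, σ)`, then
`W_{G,σ} = U ∪ W_{G[V \ U], σ}`, where `G[V \ U]` is the induced subgame on
`V \ U` with winning condition restricted to subsets of `V \ U`. -/
theorem winRegion_attr_reduction {V : Type*} [Fintype V]
    (E : V → V → Prop) (hE : ∀ v, ∃ w, E v w) (P : Set V) (W : Set (Set V))
    (X : Set V) (hXW : X ⊆ winRegion E P W) :
    winRegion E P W =
      attr E P X ∪
        winRegion (restrictE E (attr E P X)ᶜ) (P ∩ (attr E P X)ᶜ)
          {S | S ∈ W ∧ S ⊆ (attr E P X)ᶜ} := by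
  classical
  ext v
  constructor
  · intro hv
    by_cases hU : v ∈ attr E P X
    · exact Or.inl hU
    · right
      obtain ⟨s, hsv, hsw⟩ := hv
      refine ⟨s, ?_, ?_⟩
      · intro h u hu _
        obtain ⟨w0, hw0⟩ := hE u
        have hEs : E u (s h u) := hsv h u hu.1 ⟨w0, hw0⟩
        exact ⟨hEs, hu.2, fun hmem => hu.2 (AttrP.step hu.1 hEs hmem)⟩
      · intro f hf0 hplay hcons
        have hUc : ∀ n, f n ∉ attr E P X := by
          intro n
          cases n with
          | zero => exact (hplay 0).2.1
          | succ k => exact (hplay k).2.2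
        have hplay' : IsPlay E f := fun n => (hplay n).1
        have hcons' : Consistent P s f := fun n hn => hcons n ⟨hn, hUc n⟩
        refine ⟨hsw f hf0 hplay' hcons', ?_⟩
        intro x hx
        obtain ⟨m, _, rfl⟩ := hx 0
        exact hUc m
  · rintro (hU | hsub)
    · exact attr_subset_winRegion E hE P W X hXW hU
    · exact subgame_to_game E hE P W X hXW hsub
end

section
/- Restriction of trap-depth winning first moves to a trap: Let G be a Muller game. Suppose X is a valid first move for σ in the trap-depth game on G (i.e., X is a nonempty σ̄-trap with X ∈ R_σ) from which σ can guarantee a win in at most k rounds, and let A be a σ-trap in G with A ∩ X ≠ ∅. Then there exists Y ⊆ X ∩ A that is a valid first move for σ in the trap-depth game on G[A] from which σ can guarantee a win in at most k rounds. -/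
/-- `WinTD E P R k S` says player σ (vertex set `P`, winning family `R`) can
guarantee winning the trap-depth game, moving first on the subgame induced by
`S`, within `k` rounds: σ picks a nonempty σ̄-trap `X` of `G[S]` with `X ∈ R`,
and every possible reply `Y` (a nonempty σ-trap of `G[X]`) either satisfies
`Y ∈ R` (so it is not a legal reply for σ̄) or σ wins from `G[Y]` within `k-1`
rounds. -/
def WinTD {V : Type*} (E : V → V → Prop) (P : Set V) (R : Set (Set V)) :
    ℕ → Set V → Prop
  | 0, _ => False
  | k + 1, S => ∃ X : Set V, X.Nonempty ∧ X ⊆ S ∧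
      IsTrap (restrictE E S) (Pᶜ ∩ S) X ∧ X ∈ R ∧
      ∀ Y : Set V, Y.Nonempty → Y ⊆ X → IsTrap (restrictE E X) (P ∩ X) Y →
        (Y ∈ R ∨ WinTD E P R k Y)

/-- `X` is a valid first move for σ in the trap-depth game on `G[S]` from which
σ can guarantee a win in at most `k` rounds. -/
def FirstMoveWin {V : Type*} (E : V → V → Prop) (P : Set V) (R : Set (Set V))
    (k : ℕ) (S X : Set V) : Prop :=
  1 ≤ k ∧ X.Nonempty ∧ X ⊆ S ∧ IsTrap (restrictE E S) (Pᶜ ∩ S) X ∧ X ∈ R ∧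
    ∀ Y : Set V, Y.Nonempty → Y ⊆ X → IsTrap (restrictE E X) (P ∩ X) Y →
      (Y ∈ R ∨ WinTD E P R (k - 1) Y)

/- ---------- auxiliary lemmas ---------- -/

lemma restrict_restrict {V : Type*} (E : V → V → Prop) (A S : Set V) (h : S ⊆ A) :
    restrictE (restrictE E A) S = restrictE E S := by
  funext v w
  apply propext
  constructor
  · rintro ⟨⟨he, -, -⟩, hv, hw⟩; exact ⟨he, hv, hw⟩
  · rintro ⟨he, hv, hw⟩; exact ⟨⟨he, h hv, h hw⟩, hv, hw⟩

lemma compl_inter_of_subset {V : Type*} (P A S : Set V) (h : S ⊆ A) :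
    (P ∩ A)ᶜ ∩ S = Pᶜ ∩ S := by
  ext v
  constructor
  · rintro ⟨hc, hS⟩; exact ⟨fun hp => hc ⟨hp, h hS⟩, hS⟩
  · rintro ⟨hc, hS⟩; exact ⟨fun hp => hc hp.1, hS⟩

lemma inter_inter_of_subset {V : Type*} (P A S : Set V) (h : S ⊆ A) :
    (P ∩ A) ∩ S = P ∩ S := by
  ext v
  constructor
  · rintro ⟨⟨hp, -⟩, hS⟩; exact ⟨hp, hS⟩
  · rintro ⟨hp, hS⟩; exact ⟨⟨hp, h hS⟩, hS⟩

lemma winTD_succ {V : Type*} (E : V → V → Prop) (P : Set V) (R : Set (Set V)) :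
    ∀ m (S : Set V), WinTD E P R m S → WinTD E P R (m + 1) S := by
  intro m
  induction m with
  | zero => intro S h; exact h.elim
  | succ m ih =>
      intro S h
      obtain ⟨X, h1, h2, h3, h4, h5⟩ := h
      exact ⟨X, h1, h2, h3, h4, fun Y a b c => (h5 Y a b c).imp id (ih Y)⟩

lemma winTD_mono {V : Type*} (E : V → V → Prop) (P : Set V) (R : Set (Set V))
    {m n : ℕ} (h : m ≤ n) (S : Set V) : WinTD E P R m S → WinTD E P R n S := by
  induction h with
  | refl => exact id
  | step _ ih => exact fun w => winTD_succ E P R _ S (ih w)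

/-- Winning the trap-depth game on `G[S]` transfers to the game `G[A]` when
`S ⊆ A`, with the winning family restricted to subsets of `A`. -/
lemma winTD_restrict {V : Type*} (E : V → V → Prop) (P : Set V) (R : Set (Set V))
    (A : Set V) : ∀ m (S : Set V), S ⊆ A → WinTD E P R m S →
    WinTD (restrictE E A) (P ∩ A) {T | T ∈ R ∧ T ⊆ A} m S := by
  intro m
  induction m with
  | zero => intro S _ h; exact h.elim
  | succ m ih =>
      intro S hSA h
      obtain ⟨X, h1, h2, h3, h4, h5⟩ := h
      refine ⟨X, h1, h2, ?_, ⟨h4, h2.trans hSA⟩, ?_⟩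
      · rw [restrict_restrict E A S hSA, compl_inter_of_subset P A S hSA]
        exact h3
      · intro Y hYne hYX hYtrap
        rw [restrict_restrict E A X (h2.trans hSA),
          inter_inter_of_subset P A X (h2.trans hSA)] at hYtrap
        rcases h5 Y hYne hYX hYtrap with hR | hW
        · exact Or.inl ⟨hR, hYX.trans (h2.trans hSA)⟩
        · exact Or.inr (ih Y (hYX.trans (h2.trans hSA)) hW)

/-- Restriction of trap-depth winning first moves to a trap: if `X` is a valid
first move for σ in the trap-depth game on `G` guaranteeing a win within `k`
rounds, and `A` is a σ-trap in `G` with `A ∩ X ≠ ∅`, then some `Y ⊆ X ∩ A` is a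
valid first move for σ in the trap-depth game on `G[A]` (whose winning family
is that of `G` restricted to subsets of `A`) guaranteeing a win within `k`
rounds. -/
theorem firstMove_restrict_to_trap {V : Type*} [Fintype V]
    (E : V → V → Prop) (hE : ∀ v, ∃ w, E v w) (P : Set V) (R : Set (Set V))
    (k : ℕ) (X A : Set V)
    (hX : FirstMoveWin E P R k Set.univ X)
    (hA : IsTrap E P A) (hAX : (A ∩ X).Nonempty) :
    ∃ Y : Set V, Y ⊆ X ∩ A ∧
      FirstMoveWin (restrictE E A) (P ∩ A) {S | S ∈ R ∧ S ⊆ A} k A Y := by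
  obtain ⟨hk1, hXne, -, hXtrap, hXR, hXrep⟩ := hX
  -- `A ∩ X` is a σ-trap in `G[X]`
  have hAXP : IsTrap (restrictE E X) (P ∩ X) (A ∩ X) := by
    constructor
    · rintro v ⟨hvA, hvX⟩ ⟨hvP, -⟩ w ⟨hew, -, hwX⟩
      exact ⟨hA.1 v hvA hvP w hew, hwX⟩
    · rintro v ⟨hvA, hvX⟩ hv
      have hvP : v ∉ P := fun h => hv ⟨h, hvX⟩
      obtain ⟨w, hwA, hew⟩ := hA.2 v hvA hvP
      have hwX : w ∈ X :=
        hXtrap.1 v hvX ⟨hvP, Set.mem_univ v⟩ w ⟨hew, Set.mem_univ v, Set.mem_univ w⟩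
      exact ⟨w, ⟨hwA, hwX⟩, hew, hvX, hwX⟩
  -- `A ∩ X` is a σ̄-trap in `G[A]`
  have hAXtrap : IsTrap (restrictE E A) (Pᶜ ∩ A) (A ∩ X) := by
    constructor
    · rintro v ⟨hvA, hvX⟩ ⟨hvP, -⟩ w ⟨hew, -, hwA⟩
      exact ⟨hwA, hXtrap.1 v hvX ⟨hvP, Set.mem_univ v⟩ w ⟨hew, Set.mem_univ v, Set.mem_univ w⟩⟩
    · rintro v ⟨hvA, hvX⟩ hv
      have hvP : v ∈ P := by
        by_contra h
        exact hv ⟨h, hvA⟩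
      obtain ⟨w, hwX, hew, -, -⟩ := hXtrap.2 v hvX (fun h => absurd hvP (by simpa using h.1))
      have hwA := hA.1 v hvA hvP w hew
      exact ⟨w, ⟨hwA, hwX⟩, hew, hvA, hwA⟩
  -- `A ∩ X` is a legal reply of σ̄ to the move `X`, so use `hXrep`
  rcases hXrep (A ∩ X) hAX Set.inter_subset_right hAXP with hR | hW
  · -- `A ∩ X ∈ R` : it itself is the desired first move in `G[A]`
    refine ⟨A ∩ X, by rw [Set.inter_comm], hk1, hAX, Set.inter_subset_left, ?_,
      ⟨hR, Set.inter_subset_left⟩, ?_⟩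
    · rw [restrict_restrict E A A subset_rfl, compl_inter_of_subset P A A subset_rfl]
      exact hAXtrap
    · intro Z hZne hZsub hZtrap
      rw [restrict_restrict E A (A ∩ X) Set.inter_subset_left,
        inter_inter_of_subset P A (A ∩ X) Set.inter_subset_left] at hZtrap
      -- `Z` is a σ-trap in `G[X]` (trap of a subtrap)
      have hZX : IsTrap (restrictE E X) (P ∩ X) Z := by
        constructor
        · rintro v hvZ ⟨hvP, hvX⟩ w hew
          have hvAX : v ∈ A ∩ X := hZsub hvZ
          have hwAX : w ∈ A ∩ X := hAXP.1 v hvAX ⟨hvP, hvX⟩ w hew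
          exact hZtrap.1 v hvZ ⟨hvP, hvAX⟩ w ⟨hew.1, hvAX, hwAX⟩
        · rintro v hvZ hv
          have hvAX : v ∈ A ∩ X := hZsub hvZ
          have hvP : v ∉ P := fun h => hv ⟨h, hvAX.2⟩
          obtain ⟨w, hwZ, hew, hvAX', hwAX⟩ :=
            hZtrap.2 v hvZ (fun h => hvP h.1)
          exact ⟨w, hwZ, hew, hvAX.2, hwAX.2⟩
      rcases hXrep Z hZne (hZsub.trans Set.inter_subset_right) hZX with hZR | hZW
      · exact Or.inl ⟨hZR, hZsub.trans Set.inter_subset_left⟩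
      · exact Or.inr (winTD_restrict E P R A (k - 1) Z
          (hZsub.trans Set.inter_subset_left) hZW)
  · -- `A ∩ X ∉ R` forced σ to have a winning continuation `WinTD (k-1) (A∩X)`
    rcases hk : k - 1 with - | m
    · rw [hk] at hW; exact hW.elim
    rw [hk] at hW
    obtain ⟨X', hX'ne, hX'sub, hX'trap, hX'R, hX'rep⟩ := hW
    have hX'A : X' ⊆ A := hX'sub.trans Set.inter_subset_left
    refine ⟨X', by rw [Set.inter_comm]; exact hX'sub, hk1, hX'ne, hX'A, ?_,
      ⟨hX'R, hX'A⟩, ?_⟩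
    · -- `X'` is a σ̄-trap of `G[A]` (σ̄-trap of the σ̄-trap `A∩X` of `G[A]`)
      rw [restrict_restrict E A A subset_rfl, compl_inter_of_subset P A A subset_rfl]
      constructor
      · rintro v hvX' ⟨hvP, hvA⟩ w hew
        have hvAX : v ∈ A ∩ X := hX'sub hvX'
        have hwAX : w ∈ A ∩ X := hAXtrap.1 v hvAX ⟨hvP, hvA⟩ w hew
        exact hX'trap.1 v hvX' ⟨hvP, hvAX⟩ w ⟨hew.1, hvAX, hwAX⟩
      · rintro v hvX' hv
        have hvAX : v ∈ A ∩ X := hX'sub hvX'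
        have hvP : v ∈ P := by
          by_contra h
          exact hv ⟨h, hvAX.1⟩
        obtain ⟨w, hwX', hew, hvAX', hwAX⟩ :=
          hX'trap.2 v hvX' (fun h => absurd hvP (by simpa using h.1))
        exact ⟨w, hwX', hew, hvAX.1, hwAX.1⟩
    · intro Z hZne hZsub hZtrap
      rw [restrict_restrict E A X' hX'A, inter_inter_of_subset P A X' hX'A] at hZtrap
      rcases hX'rep Z hZne hZsub hZtrap with hZR | hZW
      · exact Or.inl ⟨hZR, hZsub.trans hX'A⟩
      · refine Or.inr (winTD_mono (restrictE E A) (P ∩ A) _ ?_ Z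
          (winTD_restrict E P R A m Z (hZsub.trans hX'A) hZW))
        omega
end

section
/- In a parity game, for every set of target vertices T with λ > p(v) for all v ∈ V \ T, if V is good (every σ-trap of V has its maximum-priority vertices of parity σ) then S := GenAttr-style computation with a nice-with-traps algorithm satisfies: S = Attr(G, S, σ), and if V \ S ≠ ∅ then all maximum-priority vertices of V \ S belong to player σ. -/
/-- The λ-safe attractor for the player with vertex set `P` in a parity game
with priorities `p`: the least set containing `X`, closed under adding
`P`-vertices of priority `< lam` with some out-neighbor inside and opponent
vertices of priority `< lam` with all out-neighbors inside. -/
inductive SafeAttrP {V : Type*} (E : V → V → Prop) (P : Set V) (p : V → ℤ)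
    (lam : ℤ) (X : Set V) : V → Prop
  | base {v} : v ∈ X → SafeAttrP E P p lam X v
  | step {v w} : v ∈ P → p v < lam → E v w → SafeAttrP E P p lam X w →
      SafeAttrP E P p lam X v
  | forced {v} : v ∉ P → p v < lam → (∀ w, E v w → SafeAttrP E P p lam X w) →
      SafeAttrP E P p lam X v

def safeAttr {V : Type*} (E : V → V → Prop) (P : Set V) (p : V → ℤ)
    (lam : ℤ) (X : Set V) : Set V :=
  {v | SafeAttrP E P p lam X v}

/-- The vertices of `S` of maximum priority. -/
def maxSet {V : Type*} (p : V → ℤ) (S : Set V) : Set V :=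
  {v ∈ S | ∀ w ∈ S, p w ≤ p v}

/-- Suppose every nonempty σ-trap of `G` has all its maximum-priority vertices
of parity σ (i.e. `V` is good, with the auxiliary algorithm ParAlg always
returning `∅`, so that the generalized safe attractor coincides with the safe
attractor). Then for every target set `T` with `λ > p v` for all `v ∈ V \ T`,
the set `S := SafeAttr(G, λ, T, σ)` satisfies `S = Attr(G, S, σ)`, and if
`V \ S ≠ ∅` then all maximum-priority vertices of `V \ S` belong to player σ. -/
theorem genAttr_of_good {V : Type*} [Fintype V]
    (E : V → V → Prop) (hE : ∀ v, ∃ w, E v w) (p : V → ℤ) (P : Set V)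
    (hP : P = {v | Even (p v)} ∨ P = {v | ¬ Even (p v)})
    (hGood : ∀ Y : Set V, Y.Nonempty → IsTrap E P Y → maxSet p Y ⊆ P)
    (T : Set V) (lam : ℤ) (hlam : ∀ v, v ∉ T → p v < lam) :
    safeAttr E P p lam T = attr E P (safeAttr E P p lam T) ∧
    ((safeAttr E P p lam T)ᶜ.Nonempty →
      maxSet p (safeAttr E P p lam T)ᶜ ⊆ P) := by
  set S := safeAttr E P p lam T with hS
  have hTS : T ⊆ S := fun v hv => SafeAttrP.base hv
  constructor
  · apply Set.Subset.antisymm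
    · exact fun v hv => AttrP.base hv
    · intro v hv
      induction hv with
      | base h => exact h
      | @step v w hvP hvw _ ih =>
        by_cases hT : v ∈ T
        · exact hTS hT
        · exact SafeAttrP.step hvP (hlam v hT) hvw ih
      | @forced v hvP _ ih =>
        by_cases hT : v ∈ T
        · exact hTS hT
        · exact SafeAttrP.forced hvP (hlam v hT) fun w hw => ih w hw
  · intro hne
    apply hGood _ hne
    constructor
    · intro v hv hvP w hvw
      intro hwS
      have hT : v ∉ T := fun h => hv (hTS h)
      exact hv (SafeAttrP.step hvP (hlam v hT) hvw hwS)
    · intro v hv hvP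
      by_contra h
      push_neg at h
      have hT : v ∉ T := fun hh => hv (hTS hh)
      apply hv
      exact SafeAttrP.forced hvP (hlam v hT) fun w hw => by
        by_contra hc
        exact h w hc hw
end

section
/- For the family of parity games G_n (n even) consisting of two directed paths of n/2 vertices each with appropriate priorities as in the paper's Figure 2 construction, the Even-trap-depth of G_n is exactly n/2; in particular, for every k there exists a parity game with O(k) vertices and edges whose trap-depth is exactly k. -/
/-- In a parity game with priorities `p`, a set belongs to `R_σ` when all its
maximum-priority vertices have parity σ; here for σ = Even. -/
def REven {V : Type*} (p : V → ℤ) : Set (Set V) :=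
  {S | maxSet p S ⊆ {v | Even (p v)}}

def ROdd {V : Type*} (p : V → ℤ) : Set (Set V) :=
  {S | maxSet p S ⊆ {v | ¬ Even (p v)}}



-- Auxiliary construction: two paths of k pairs (Figure 2).
namespace TDGame

abbrev Vk (k : ℕ) := Fin k × Bool
def Ek (k : ℕ) : Vk k → Vk k → Prop := fun v w =>
  (v.2 = true ∧ w = (v.1, false)) ∨
  (v.2 = false ∧ (w = (v.1, true) ∨ ((w.1 : ℕ) + 1 = (v.1 : ℕ) ∧ w.2 = false) ∨
    ((v.1 : ℕ) + 1 = (w.1 : ℕ) ∧ w.2 = true)))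
def pk (k : ℕ) : Vk k → ℤ := fun v => 2 * (v.1 : ℕ) + (if v.2 then 2 else 1)
variable {k : ℕ}
lemma pk_a (j : Fin k) : pk k (j, true) = 2 * (j : ℕ) + 2 := by simp [pk]
lemma pk_b (j : Fin k) : pk k (j, false) = 2 * (j : ℕ) + 1 := by simp [pk]
lemma even_pk (v : Vk k) : Even (pk k v) ↔ v.2 = true := by
  obtain ⟨j, b⟩ := v
  cases b
  · rw [pk_b, Int.even_iff]; constructor
    · intro h; omega
    · intro h; exact absurd h (by simp)
  · rw [pk_a, Int.even_iff]; constructor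
    · intro _; rfl
    · intro _; omega
lemma edge_ab (j : Fin k) : Ek k (j, true) (j, false) := Or.inl ⟨rfl, rfl⟩
lemma edge_ba (j : Fin k) : Ek k (j, false) (j, true) := Or.inr ⟨rfl, Or.inl rfl⟩
lemma edge_bdown {j j' : Fin k} (h : (j' : ℕ) + 1 = (j : ℕ)) :
    Ek k (j, false) (j', false) := Or.inr ⟨rfl, Or.inr (Or.inl ⟨h, rfl⟩)⟩
lemma edge_bup {j j' : Fin k} (h : (j : ℕ) + 1 = (j' : ℕ)) :
    Ek k (j, false) (j', true) := Or.inr ⟨rfl, Or.inr (Or.inr ⟨h, rfl⟩)⟩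
lemma edge_from_a {j : Fin k} {w : Vk k} (h : Ek k (j, true) w) : w = (j, false) := by
  rcases h with ⟨_, hw⟩ | ⟨hb, _⟩
  · exact hw
  · exact absurd hb (by simp)
lemma edge_from_b {j : Fin k} {w : Vk k} (h : Ek k (j, false) w) :
    w = (j, true) ∨ ((w.1 : ℕ) + 1 = (j : ℕ) ∧ w.2 = false) ∨
      ((j : ℕ) + 1 = (w.1 : ℕ) ∧ w.2 = true) := by
  rcases h with ⟨hb, _⟩ | ⟨_, h⟩
  · exact absurd hb (by simp)
  · exact h

lemma exists_a {C : Set (Vk k)} (hne : C.Nonempty)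
    (hout : ∀ j : Fin k, (j, false) ∈ C → ∃ w ∈ C, Ek k (j, false) w) :
    ∃ i : Fin k, (i, true) ∈ C := by
  classical
  by_contra hno
  push_neg at hno
  have hB : (Finset.univ.filter (fun j : Fin k => (j, false) ∈ C)).Nonempty := by
    obtain ⟨⟨j, b⟩, hv⟩ := hne
    cases b
    · exact ⟨j, by simp [hv]⟩
    · exact absurd hv (hno j)
  set B := Finset.univ.filter (fun j : Fin k => (j, false) ∈ C) with hBdef
  have hj0 : ((B.min' hB, false) : Vk k) ∈ C := by
    have := B.min'_mem hB
    simp [hBdef] at this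
    exact this
  obtain ⟨w, hwC, hwE⟩ := hout _ hj0
  obtain ⟨w1, w2⟩ := w
  rcases edge_from_b hwE with h1 | ⟨h2, h2b⟩ | ⟨h3, h3b⟩
  · exact hno _ (h1 ▸ hwC)
  · simp only at h2b h2; subst h2b
    have hw1B : w1 ∈ B := by simp [hBdef, hwC]
    have h4 : (B.min' hB : ℕ) ≤ (w1 : ℕ) := B.min'_le w1 hw1B
    omega
  · simp only at h3b; subst h3b
    exact hno w1 hwC

lemma exists_max_a {C : Set (Vk k)} (hA : ∃ i : Fin k, (i, true) ∈ C) :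
    ∃ i : Fin k, (i, true) ∈ C ∧ ∀ j : Fin k, (j, true) ∈ C → (j : ℕ) ≤ (i : ℕ) := by
  classical
  obtain ⟨i0, hi0⟩ := hA
  set F := Finset.univ.filter (fun j : Fin k => (j, true) ∈ C) with hFdef
  have hF : F.Nonempty := ⟨i0, by simp [hFdef, hi0]⟩
  refine ⟨F.max' hF, ?_, fun j hj => ?_⟩
  · have := F.max'_mem hF; simpa [hFdef] using this
  · exact F.le_max' j (by simp [hFdef, hj])

lemma pickTrap {C : Set (Vk k)} (i : Fin k)
    (hcl : ∀ j : Fin k, (j, true) ∈ C → (j, false) ∈ C)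
    (hai : (i, true) ∈ C)
    (hmax : ∀ j : Fin k, (j, true) ∈ C → (j : ℕ) ≤ (i : ℕ)) :
    ({v ∈ C | (v.1 : ℕ) ≤ (i : ℕ)}).Nonempty ∧
    {v ∈ C | (v.1 : ℕ) ≤ (i : ℕ)} ⊆ C ∧
    IsTrap (restrictE (Ek k) C) ({v : Vk k | v.2 = false} ∩ C)
      {v ∈ C | (v.1 : ℕ) ≤ (i : ℕ)} ∧
    (i, true) ∈ maxSet (pk k) {v ∈ C | (v.1 : ℕ) ≤ (i : ℕ)} ∧
    maxSet (pk k) {v ∈ C | (v.1 : ℕ) ≤ (i : ℕ)} ⊆ {v : Vk k | Even (pk k v)} := by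
  have hbound : ∀ v : Vk k, v ∈ C → (v.1 : ℕ) ≤ (i : ℕ) → pk k v ≤ pk k (i, true) := by
    rintro ⟨j, b⟩ _ hle
    simp only at hle
    rw [pk_a]
    cases b
    · rw [pk_b]; push_cast; omega
    · rw [pk_a]; push_cast; omega
  refine ⟨⟨(i, true), hai, le_refl _⟩, Set.sep_subset _ _, ⟨?_, ?_⟩, ⟨⟨hai, le_refl _⟩, ?_⟩, ?_⟩
  · rintro ⟨j, b⟩ ⟨hvC, hvle⟩ ⟨hvb, _⟩ w ⟨hE, _, hwC⟩
    simp only [Set.mem_setOf_eq] at hvb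
    subst hvb
    refine ⟨hwC, ?_⟩
    obtain ⟨w1, w2⟩ := w
    simp only at hvle
    rcases edge_from_b hE with h1 | ⟨h2, h2b⟩ | ⟨h3, h3b⟩
    · rw [h1]; exact hvle
    · simp only at h2b h2 ⊢; omega
    · simp only at h3b; subst h3b; exact hmax w1 hwC
  · rintro ⟨j, b⟩ ⟨hvC, hvle⟩ hvQ
    have hb : b = true := by
      by_contra hb
      have : b = false := by cases b; rfl; exact absurd rfl hb
      exact hvQ ⟨this, hvC⟩
    subst hb
    exact ⟨(j, false), ⟨hcl j hvC, hvle⟩, edge_ab j, hvC, hcl j hvC⟩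
  · rintro w ⟨hwC, hwle⟩
    exact hbound w hwC hwle
  · rintro v ⟨⟨hvC, hvle⟩, hvmax⟩
    rw [Set.mem_setOf_eq, even_pk]
    by_contra hb
    have hvb : v.2 = false := by cases hv2 : v.2; rfl; exact absurd hv2 hb
    have h1 : pk k (i, true) ≤ pk k v := hvmax (i, true) ⟨hai, le_refl _⟩
    obtain ⟨j, b⟩ := v
    simp only at hvb; subst hvb
    rw [pk_a, pk_b] at h1
    simp only at hvle h1
    omega
variable {k : ℕ}

lemma lemU : ∀ (m : ℕ) (Y : Set (Vk k)),
    (∀ j : Fin k, (j, true) ∈ Y → (j, false) ∈ Y) →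
    (∃ j : Fin k, (j, true) ∈ Y) →
    (∀ j : Fin k, (j, true) ∈ Y → (j : ℕ) < m) →
    WinTD (Ek k) {v | Even (pk k v)} (REven (pk k)) m Y := by
  intro m
  induction m with
  | zero =>
    intro Y _ hA hbd
    obtain ⟨j, hj⟩ := hA
    exact absurd (hbd j hj) (Nat.not_lt_zero _)
  | succ m ih =>
    intro Y hcl hA hbd
    obtain ⟨i, hai, hmax⟩ := exists_max_a hA
    obtain ⟨hne, hsub, htrap, hmaxmem, hRE⟩ := pickTrap i hcl hai hmax
    set D := {v ∈ Y | (v.1 : ℕ) ≤ (i : ℕ)} with hDdef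
    have hQeq : ({v : Vk k | Even (pk k v)}ᶜ ∩ Y) = ({v : Vk k | v.2 = false} ∩ Y) := by
      ext v; simp [even_pk, Bool.not_eq_true]
    refine ⟨D, hne, hsub, by rw [hQeq]; exact htrap, hRE, ?_⟩
    intro Z hZne hZsub hZtrap
    by_cases hZR : Z ∈ REven (pk k)
    · exact Or.inl hZR
    right
    obtain ⟨v, hvmax, hvodd⟩ := Set.not_subset.mp hZR
    have hvb : v.2 = false := by
      rcases hv2 : v.2 with _ | _
      · rfl
      · exact absurd ((even_pk v).mpr hv2) hvodd
    obtain ⟨hvZ, hvtop⟩ := hvmax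
    obtain ⟨jm, bm⟩ := v
    simp only at hvb
    subst hvb
    -- Even-closure of Z
    have hclZ : ∀ l : Fin k, (l, true) ∈ Z → (l, false) ∈ Z := by
      intro l hl
      have hlD : ((l, true) : Vk k) ∈ D := hZsub hl
      have hlY : ((l, true) : Vk k) ∈ Y := hsub hlD
      have hbD : ((l, false) : Vk k) ∈ D := ⟨hcl l hlY, hlD.2⟩
      exact hZtrap.1 _ hl ⟨(even_pk _).mpr rfl, hlD⟩ _ ⟨edge_ab l, hlD, hbD⟩
    apply ih
    · exact hclZ
    · apply exists_a hZne
      intro l hl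
      have : ((l, false) : Vk k) ∉ ({v : Vk k | Even (pk k v)} ∩ D) := by
        rintro ⟨he, _⟩
        rw [Set.mem_setOf_eq, even_pk] at he
        exact Bool.noConfusion he
      obtain ⟨w, hwZ, hwE, _, _⟩ := hZtrap.2 _ hl this
      exact ⟨w, hwZ, hwE⟩
    · intro l hl
      have h1 : pk k (l, true) ≤ pk k (jm, false) := hvtop (l, true) hl
      rw [pk_a, pk_b] at h1
      have h2 : (jm : ℕ) ≤ (i : ℕ) := (hZsub hvZ).2
      have h3 : (i : ℕ) < m + 1 := hbd i hai
      omega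
variable {k : ℕ}

def SmS (k m : ℕ) : Set (Vk k) := {v | (v.1 : ℕ) < m}
def TmS (k m : ℕ) : Set (Vk k) := {v | (v.1 : ℕ) + 1 < m ∨ ((v.1 : ℕ) + 1 = m ∧ v.2 = false)}

lemma TmS_subset (m : ℕ) : TmS k m ⊆ SmS k m := by
  intro v hv; rcases hv with h | ⟨h, _⟩ <;> simp only [SmS, Set.mem_setOf_eq] <;> omega

lemma mem_SmS {v : Vk k} {m : ℕ} : v ∈ SmS k m ↔ (v.1 : ℕ) < m := Iff.rfl

lemma onlyTrap {m : ℕ} (hm : 0 < m) (hmk : m ≤ k) {X : Set (Vk k)}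
    (hsub : X ⊆ SmS k m) (hne : X.Nonempty)
    (htrap : IsTrap (restrictE (Ek k) (SmS k m)) ({v : Vk k | v.2 = false} ∩ SmS k m) X) :
    X = SmS k m := by
  have hab : ∀ j : Fin k, (j, true) ∈ X → (j, false) ∈ X := by
    intro j hj
    have hQ : ((j, true) : Vk k) ∉ ({v : Vk k | v.2 = false} ∩ SmS k m) := by
      rintro ⟨hb, _⟩; exact Bool.noConfusion hb
    obtain ⟨w, hwX, hwE, _, _⟩ := htrap.2 _ hj hQ
    exact (edge_from_a hwE) ▸ hwX
  have hba : ∀ j : Fin k, (j, false) ∈ X → (j, true) ∈ X := by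
    intro j hj
    have hjS : ((j, false) : Vk k) ∈ SmS k m := hsub hj
    exact htrap.1 _ hj ⟨rfl, hjS⟩ (j, true) ⟨edge_ba j, hjS, hjS⟩
  have hdown : ∀ j j' : Fin k, (j' : ℕ) + 1 = (j : ℕ) → (j, false) ∈ X → (j', false) ∈ X := by
    intro j j' hjj hj
    have hjS : ((j, false) : Vk k) ∈ SmS k m := hsub hj
    have hj'S : ((j', false) : Vk k) ∈ SmS k m := by
      rw [mem_SmS] at *; simp only at *; omega
    exact htrap.1 _ hj ⟨rfl, hjS⟩ _ ⟨edge_bdown hjj, hjS, hj'S⟩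
  have hup : ∀ j j' : Fin k, (j : ℕ) + 1 = (j' : ℕ) → (j' : ℕ) < m →
      (j, false) ∈ X → (j', false) ∈ X := by
    intro j j' hjj hj'm hj
    have hjS : ((j, false) : Vk k) ∈ SmS k m := hsub hj
    have hj'S : ((j', true) : Vk k) ∈ SmS k m := hj'm
    exact hab j' (htrap.1 _ hj ⟨rfl, hjS⟩ _ ⟨edge_bup hjj, hjS, hj'S⟩)
  obtain ⟨⟨j0, b0⟩, hv0⟩ := hne
  have hb0 : (j0, false) ∈ X := by
    cases b0
    · exact hv0
    · exact hab _ hv0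
  have hj0m : (j0 : ℕ) < m := hsub hb0
  have hdownall : ∀ d : ℕ, d ≤ (j0 : ℕ) → ∀ j : Fin k, (j : ℕ) = (j0 : ℕ) - d →
      (j, false) ∈ X := by
    intro d
    induction d with
    | zero =>
      intro _ j hjeq
      have : j = j0 := Fin.ext (by omega)
      exact this ▸ hb0
    | succ d ihd =>
      intro hd j hjeq
      have hjpk : (j0 : ℕ) - d < k := by omega
      have hjp := ihd (by omega) ⟨(j0 : ℕ) - d, hjpk⟩ rfl
      exact hdown _ j (by simp only; omega) hjp
  have hupall : ∀ n : ℕ, n < m → (j0 : ℕ) ≤ n → ∀ j : Fin k, (j : ℕ) = n →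
      (j, false) ∈ X := by
    intro n
    induction n with
    | zero =>
      intro _ h0 j hjeq
      have : j = j0 := Fin.ext (by omega)
      exact this ▸ hb0
    | succ n ihn =>
      intro hnm hj0n j hjeq
      by_cases hcase : (j0 : ℕ) = n + 1
      · exact (Fin.ext (by omega) : j = j0) ▸ hb0
      · have hnk : n < k := by omega
        have hjp := ihn (by omega) (by omega) ⟨n, hnk⟩ rfl
        exact hup _ j (by simp only; omega) (by omega) hjp
  have hall : ∀ j : Fin k, (j : ℕ) < m → (j, false) ∈ X := by
    intro j hj
    by_cases hle : (j : ℕ) ≤ (j0 : ℕ)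
    · exact hdownall ((j0 : ℕ) - (j : ℕ)) (by omega) j (by omega)
    · exact hupall (j : ℕ) hj (by omega) j rfl
  apply Set.Subset.antisymm hsub
  rintro ⟨j, b⟩ hv
  have hjm : (j : ℕ) < m := hv
  cases b
  · exact hall j hjm
  · exact hba j (hall j hjm)
variable {k : ℕ}

lemma maxT {m : ℕ} (hm : 1 ≤ m) (hmk : m ≤ k) {w : Vk k} (hw : w ∈ TmS k m) :
    pk k w ≤ 2 * (m - 1 : ℕ) + 1 := by
  obtain ⟨j, b⟩ := w
  rcases hw with h | ⟨h, hb⟩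
  · simp only at h
    cases b
    · rw [pk_b]; push_cast; omega
    · rw [pk_a]; push_cast; omega
  · simp only at h hb
    subst hb
    rw [pk_b]; push_cast; omega

lemma bm_mem_TmS {m : ℕ} (hm : 1 ≤ m) (hmk : m ≤ k) :
    ((⟨m - 1, by omega⟩, false) : Vk k) ∈ TmS k m := Or.inr ⟨by simp; omega, rfl⟩

lemma bm_maxSet {m : ℕ} (hm : 1 ≤ m) (hmk : m ≤ k) {X : Set (Vk k)}
    (hsub : X ⊆ TmS k m) (hmem : ((⟨m - 1, by omega⟩, false) : Vk k) ∈ X) :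
    ((⟨m - 1, by omega⟩, false) : Vk k) ∈ maxSet (pk k) X := by
  refine ⟨hmem, fun w hw => ?_⟩
  have := maxT hm hmk (hsub hw)
  rw [pk_b]
  simp only
  omega

lemma onlyTrapT {m : ℕ} (hm : 2 ≤ m) (hmk : m ≤ k) {X : Set (Vk k)}
    (hsub : X ⊆ TmS k m) (hne : X.Nonempty)
    (htrap : IsTrap (restrictE (Ek k) (TmS k m)) ({v : Vk k | v.2 = false} ∩ TmS k m) X)
    (hR : X ∈ REven (pk k)) : X = SmS k (m - 1) := by
  have hm1 : 1 ≤ m := by omega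
  have hbm_not : ((⟨m - 1, by omega⟩, false) : Vk k) ∉ X := by
    intro hbm
    have hmax := bm_maxSet hm1 hmk hsub hbm
    have := hR hmax
    rw [Set.mem_setOf_eq, even_pk] at this
    exact Bool.noConfusion this
  have hsub' : X ⊆ SmS k (m - 1) := by
    intro v hv
    rcases hsub hv with h | ⟨h, hb⟩
    · rw [mem_SmS]; omega
    · exfalso
      obtain ⟨j, b⟩ := v
      simp only at h hb
      subst hb
      have : j = (⟨m - 1, by omega⟩ : Fin k) := Fin.ext (by simp; omega)
      exact hbm_not (this ▸ hv)
  have hsubT : SmS k (m - 1) ⊆ TmS k m := fun v hv => Or.inl (by rw [mem_SmS] at hv; omega)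
  have htrap' : IsTrap (restrictE (Ek k) (SmS k (m - 1)))
      ({v : Vk k | v.2 = false} ∩ SmS k (m - 1)) X := by
    constructor
    · rintro v hv ⟨hvb, hvS⟩ w ⟨hE, hvS2, hwS⟩
      exact htrap.1 v hv ⟨hvb, hsubT hvS⟩ w ⟨hE, hsubT hvS2, hsubT hwS⟩
    · intro v hv hvQ
      have hvS' : v ∈ SmS k (m - 1) := hsub' hv
      have hvQ' : v ∉ ({v : Vk k | v.2 = false} ∩ TmS k m) := by
        rintro ⟨hvb, _⟩
        exact hvQ ⟨hvb, hvS'⟩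
      obtain ⟨w, hwX, hE, _, _⟩ := htrap.2 v hv hvQ'
      exact ⟨w, hwX, hE, hvS', hsub' hwX⟩
  exact onlyTrap (by omega) (by omega) hsub' hne htrap'

lemma Tm_props {m : ℕ} (hm2 : 2 ≤ m) (hmk : m ≤ k) :
    (TmS k m).Nonempty ∧
    IsTrap (restrictE (Ek k) (SmS k m)) ({v : Vk k | v.2 = true} ∩ SmS k m) (TmS k m) ∧
    TmS k m ∉ REven (pk k) := by
  have hm1 : 1 ≤ m := by omega
  refine ⟨⟨_, bm_mem_TmS hm1 hmk⟩, ⟨?_, ?_⟩, ?_⟩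
  · rintro ⟨j, b⟩ hv ⟨hvb, hvS⟩ w ⟨hE, _, hwS⟩
    simp only [Set.mem_setOf_eq] at hvb
    subst hvb
    have hj : (j : ℕ) + 1 < m := by
      rcases hv with h | ⟨_, hb⟩
      · exact h
      · exact Bool.noConfusion hb
    rw [edge_from_a hE]
    exact Or.inl (by simp only; omega)
  · rintro ⟨j, b⟩ hv hvQ
    have hvS : ((j, b) : Vk k) ∈ SmS k m := TmS_subset m hv
    have hb : b = false := by
      cases b
      · rfl
      · exact absurd ⟨rfl, hvS⟩ hvQ
    subst hb
    rcases hv with h | ⟨h, _⟩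
    · simp only at h
      refine ⟨(j, true), Or.inl (by simp only; omega), edge_ba j, hvS, ?_⟩
      · rw [mem_SmS]; simp only; omega
    · simp only at h
      have hj1 : (j : ℕ) - 1 < k := by omega
      refine ⟨(⟨(j : ℕ) - 1, hj1⟩, false), Or.inl (by simp only; omega),
        edge_bdown (by simp only; omega), hvS, ?_⟩
      · rw [mem_SmS]; simp only; omega
  · intro hR
    have hmax := bm_maxSet hm1 hmk (le_refl _) (bm_mem_TmS hm1 hmk)
    have := hR hmax
    rw [Set.mem_setOf_eq, even_pk] at this
    exact Bool.noConfusion this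
variable {k : ℕ}

lemma Qeq_even_compl (S : Set (Vk k)) :
    ({v : Vk k | Even (pk k v)}ᶜ ∩ S) = ({v : Vk k | v.2 = false} ∩ S) := by
  ext v; simp [even_pk, Bool.not_eq_true]

lemma Qeq_even (S : Set (Vk k)) :
    ({v : Vk k | Even (pk k v)} ∩ S) = ({v : Vk k | v.2 = true} ∩ S) := by
  ext v; simp [even_pk]

lemma Qeq_odd_compl (S : Set (Vk k)) :
    ({v : Vk k | ¬ Even (pk k v)}ᶜ ∩ S) = ({v : Vk k | v.2 = true} ∩ S) := by
  ext v; simp [even_pk]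

lemma Qeq_odd (S : Set (Vk k)) :
    ({v : Vk k | ¬ Even (pk k v)} ∩ S) = ({v : Vk k | v.2 = false} ∩ S) := by
  ext v; simp [even_pk, Bool.not_eq_true]

lemma noWinEvenT : ∀ (j m : ℕ), 2 ≤ m → m ≤ k → j < m - 1 →
    ¬ WinTD (Ek k) {v : Vk k | Even (pk k v)} (REven (pk k)) j (TmS k m) := by
  intro j
  induction j with
  | zero => intro m _ _ _ hw; exact hw
  | succ j ihj =>
    intro m hm hmk hjm hw
    obtain ⟨X, hne, hsub, htrap, hR, hrep⟩ := hw
    rw [Qeq_even_compl] at htrap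
    have hXeq := onlyTrapT hm hmk hsub hne htrap hR
    have hm1 : 2 ≤ m - 1 := by omega
    obtain ⟨hTne, hTtrap, hTR⟩ := Tm_props (k := k) hm1 (by omega)
    have hrep' := hrep (TmS k (m - 1)) hTne
      (by rw [hXeq]; exact TmS_subset _)
      (by rw [hXeq, Qeq_even]; exact hTtrap)
    rcases hrep' with h | h
    · exact hTR h
    · have hk1 : m - 1 ≤ k := by omega
      have hj1 : j < m - 1 - 1 := by omega
      exact ihj (m - 1) hm1 hk1 hj1 h

lemma univ_eq_SmS : (Set.univ : Set (Vk k)) = SmS k k := by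
  ext v; simpa [SmS] using v.1.isLt

lemma noWinEven (hk : 0 < k) : ∀ j < k,
    ¬ WinTD (Ek k) {v : Vk k | Even (pk k v)} (REven (pk k)) j Set.univ := by
  intro j hj hw
  cases j with
  | zero => exact hw
  | succ j =>
    rw [univ_eq_SmS] at hw
    obtain ⟨X, hne, hsub, htrap, hR, hrep⟩ := hw
    rw [Qeq_even_compl] at htrap
    have hXeq := onlyTrap hk (le_refl k) hsub hne htrap
    have hk2 : 2 ≤ k := by omega
    obtain ⟨hTne, hTtrap, hTR⟩ := Tm_props hk2 (le_refl k)
    have hrep' := hrep (TmS k k) hTne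
      (by rw [hXeq]; exact TmS_subset _)
      (by rw [hXeq, Qeq_even]; exact hTtrap)
    rcases hrep' with h | h
    · exact hTR h
    · exact noWinEvenT j k hk2 (le_refl k) (by omega) h

lemma noWinOdd : ∀ (j : ℕ) (S : Set (Vk k)),
    (∀ v : Vk k, v ∈ S → v.2 = true → (v.1, false) ∈ S) →
    ¬ WinTD (Ek k) {v : Vk k | ¬ Even (pk k v)} (ROdd (pk k)) j S := by
  intro j
  induction j with
  | zero => intro S _ hw; exact hw
  | succ j ihj =>
    intro S hS hw
    obtain ⟨X, hne, hsub, htrap, hR, hrep⟩ := hw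
    rw [Qeq_odd_compl] at htrap
    have hclX : ∀ l : Fin k, (l, true) ∈ X → (l, false) ∈ X := by
      intro l hl
      have hlS : ((l, true) : Vk k) ∈ S := hsub hl
      have hbS : ((l, false) : Vk k) ∈ S := hS _ hlS rfl
      exact htrap.1 _ hl ⟨rfl, hlS⟩ _ ⟨edge_ab l, hlS, hbS⟩
    have hA : ∃ l : Fin k, (l, true) ∈ X := by
      apply exists_a hne
      intro l hl
      have hQ : ((l, false) : Vk k) ∉ ({v : Vk k | v.2 = true} ∩ S) := by
        rintro ⟨hb, _⟩; exact Bool.noConfusion hb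
      obtain ⟨w, hwX, hwE, _, _⟩ := htrap.2 _ hl hQ
      exact ⟨w, hwX, hwE⟩
    obtain ⟨i, hai, hmax⟩ := exists_max_a hA
    obtain ⟨hDne, hDsub, hDtrap, hDmax, _⟩ := pickTrap i hclX hai hmax
    have hrep' := hrep {v ∈ X | (v.1 : ℕ) ≤ (i : ℕ)} hDne hDsub
      (by rw [Qeq_odd]; exact hDtrap)
    rcases hrep' with h | h
    · exact (h hDmax) ((even_pk _).mpr rfl)
    · refine ihj _ ?_ h
      rintro ⟨l, b⟩ ⟨hvX, hvle⟩ hb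
      simp only at hb hvle ⊢
      subst hb
      exact ⟨hclX l hvX, hvle⟩

lemma card_edges : Nat.card {e : Vk k × Vk k // Ek k e.1 e.2} ≤ 10 * k := by
  classical
  have hinj : Function.Injective (fun e : {e : Vk k × Vk k // Ek k e.1 e.2} =>
      ((e.1.1, e.1.2.2, decide ((e.1.2.1 : ℕ) = (e.1.1.1 : ℕ))) : Vk k × Bool × Bool)) := by
    rintro ⟨⟨v, w⟩, hE⟩ ⟨⟨v', w'⟩, hE'⟩ heq
    simp only [Prod.mk.injEq] at heq
    obtain ⟨hv, htb, htd⟩ := heq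
    subst hv
    apply Subtype.ext
    simp only [Prod.mk.injEq]
    refine ⟨trivial, ?_⟩
    obtain ⟨vj, vb⟩ := v
    obtain ⟨wj, wb⟩ := w
    obtain ⟨wj', wb'⟩ := w'
    simp only at hE hE' htb htd ⊢
    have hiff : ((wj : ℕ) = (vj : ℕ)) ↔ ((wj' : ℕ) = (vj : ℕ)) := by
      exact decide_eq_decide.mp htd
    rcases hE with ⟨hb, hw⟩ | ⟨hb, hc⟩
    · rcases hE' with ⟨_, hw'⟩ | ⟨hb', _⟩
      · rw [hw, hw']
      · simp only at hb hb'; rw [hb] at hb'; exact Bool.noConfusion hb'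
    · rcases hE' with ⟨hb', _⟩ | ⟨_, hc'⟩
      · simp only at hb hb'; rw [hb'] at hb; exact Bool.noConfusion hb
      · simp only [Prod.mk.injEq] at hc hc'
        have hxe : ∀ (u : Fin k), wj = u → (wj : ℕ) = (u : ℕ) := by rintro u rfl; rfl
        have hye : ∀ (u : Fin k), wj' = u → (wj' : ℕ) = (u : ℕ) := by rintro u rfl; rfl
        rcases hc with ⟨h1, h1b⟩ | ⟨h1, h1b⟩ | ⟨h1, h1b⟩
        · subst h1b
          rcases hc' with ⟨h2, h2b⟩ | ⟨h2, h2b⟩ | ⟨h2, h2b⟩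
          · subst h2b; rw [h1, h2]
          · subst h2b; exact Bool.noConfusion htb
          · subst h2b; exfalso
            have := hiff.mp (hxe _ h1); omega
        · subst h1b
          rcases hc' with ⟨h2, h2b⟩ | ⟨h2, h2b⟩ | ⟨h2, h2b⟩
          · subst h2b; exact Bool.noConfusion htb
          · subst h2b
            have : wj = wj' := Fin.ext (by omega)
            rw [this]
          · subst h2b; exact Bool.noConfusion htb
        · subst h1b
          rcases hc' with ⟨h2, h2b⟩ | ⟨h2, h2b⟩ | ⟨h2, h2b⟩
          · subst h2b; exfalso
            have := hiff.mpr (hye _ h2); omega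
          · subst h2b; exact Bool.noConfusion htb
          · subst h2b
            have : wj = wj' := Fin.ext (by omega)
            rw [this]
  calc Nat.card {e : Vk k × Vk k // Ek k e.1 e.2}
      ≤ Nat.card (Vk k × Bool × Bool) := Nat.card_le_card_of_injective _ hinj
    _ = 2 * k * 4 := by
        rw [Nat.card_eq_fintype_card]
        simp [Vk]
        ring
    _ ≤ 10 * k := by omega
end TDGame

/-- The Figure 2 construction: for every `k > 0` there is a parity game `G` on
`2k` vertices (two directed paths of `k` vertices each) with `O(k)` edges whose
Even-trap-depth is exactly `k`: Even, moving first, can win the trap-depth game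
within `k` rounds but not within fewer, and Odd cannot win it (moving first)
within fewer than `k` rounds either; in particular the trap-depth of `G` is
exactly `k`. -/
theorem exists_parityGame_with_trapDepth (k : ℕ) (hk : 0 < k) :
    ∃ (V : Type) (_ : Fintype V) (E : V → V → Prop) (p : V → ℤ),
      (∀ v, ∃ w, E v w) ∧
      Fintype.card V = 2 * k ∧
      Nat.card {e : V × V // E e.1 e.2} ≤ 10 * k ∧
      WinTD E {v | Even (p v)} (REven p) k Set.univ ∧
      (∀ j < k, ¬ WinTD E {v | Even (p v)} (REven p) j Set.univ) ∧
      (∀ j < k, ¬ WinTD E {v | ¬ Even (p v)} (ROdd p) j Set.univ) := by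
  classical
  refine ⟨TDGame.Vk k, inferInstance, TDGame.Ek k, TDGame.pk k, ?_, ?_, ?_, ?_, ?_, ?_⟩
  · rintro ⟨j, b⟩
    cases b
    · exact ⟨(j, true), TDGame.edge_ba j⟩
    · exact ⟨(j, false), TDGame.edge_ab j⟩
  · simp [TDGame.Vk, mul_comm]
  · exact TDGame.card_edges
  · apply TDGame.lemU k
    · intro j _; trivial
    · exact ⟨⟨0, hk⟩, trivial⟩
    · intro j _; exact j.isLt
  · exact TDGame.noWinEven hk
  · intro j hj
    exact TDGame.noWinOdd j Set.univ (fun v _ _ => trivial)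
end
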